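/- Let θ be as in the leaper setting and φ = (rθ + m)/n in reduced form. If L(θ, φ) = 0, then L(θ, gφ) = 0 for every integer g that is not a multiple of n. -/

import Mathlib

/-- Distance from a real number to the nearest integer. -/
noncomputable def distNearestInt (x : ℝ) : ℝ := |x - round x|

/-- The inhomogeneous approximation constant. -/
noncomputable def Lconst (θ φ : ℝ) : ℝ :=
  Filter.liminf (fun q : ℤ => |(q : ℝ)| * distNearestInt (q * θ - φ)) Filter.cofinite

lemma distNearestInt_nonneg (x : ℝ) : 0 ≤ distNearestInt x := abs_nonneg _

lemma distNearestInt_le (x : ℝ) (z : ℤ) : distNearestInt x ≤ |x - z| := round_le x z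

lemma distNearestInt_int_mul (g : ℤ) (x : ℝ) :
    distNearestInt ((g : ℝ) * x) ≤ |(g : ℝ)| * distNearestInt x := by
  calc distNearestInt ((g : ℝ) * x) ≤ |(g : ℝ) * x - ((g * round x : ℤ) : ℝ)| :=
        distNearestInt_le _ _
    _ = |(g : ℝ)| * distNearestInt x := by
        unfold distNearestInt
        rw [← abs_mul]
        push_cast
        ring_nf

/-- Grid lemma: for irrational θ and any φ there are arbitrarily large q with
`|q| * ‖qθ - φ‖ ≤ 5`. -/
lemma exists_large_good (θ : ℝ) (hθ : Irrational θ) (φ : ℝ) (M : ℝ) :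
    ∃ q : ℤ, M ≤ (q : ℝ) ∧ |(q : ℝ)| * distNearestInt ((q : ℝ) * θ - φ) ≤ 5 := by
  obtain ⟨B, hB⟩ := exists_nat_ge (max M 1)
  have hB1 : (1 : ℝ) ≤ B := le_trans (le_max_right _ _) hB
  have hBM : M ≤ B := le_trans (le_max_left _ _) hB
  have hB1' : (1 : ℤ) ≤ (B : ℤ) := by exact_mod_cast hB1
  have hne : (Finset.Icc (1 : ℤ) (B : ℤ)).Nonempty := ⟨1, by simp [hB1']⟩
  set ε : ℝ := (Finset.Icc (1 : ℤ) (B : ℤ)).inf' hne (fun Q => distNearestInt ((Q : ℝ) * θ))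
    with hεdef
  have hεpos : 0 < ε := by
    rw [hεdef, Finset.lt_inf'_iff]
    intro Q hQ
    rw [Finset.mem_Icc] at hQ
    have hQ0 : Q ≠ 0 := by omega
    have : Irrational ((Q : ℝ) * θ) := Irrational.intCast_mul hθ hQ0
    have hne' : (Q : ℝ) * θ - (round ((Q : ℝ) * θ) : ℤ) ≠ 0 :=
      sub_ne_zero.mpr (this.ne_int _)
    exact abs_pos.mpr hne'
  obtain ⟨N, hN⟩ := exists_nat_ge (max (B : ℝ) (1 / ε))
  have hNB : (B : ℝ) ≤ N := le_trans (le_max_left _ _) hN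
  have hNε : 1 / ε ≤ N := le_trans (le_max_right _ _) hN
  have hNpos : 0 < N := by
    by_contra h
    push_neg at h
    interval_cases N
    simp at hNB
    linarith
  have hN1 : (0:ℝ) < (N : ℝ) + 1 := by positivity
  have hsmallε : 1 / ((N : ℝ) + 1) < ε := by
    rw [div_lt_iff₀ hN1]
    have : 1 / ε < (N : ℝ) + 1 := by linarith
    calc (1:ℝ) = ε * (1/ε) := by field_simp
      _ < ε * ((N:ℝ)+1) := by
          exact mul_lt_mul_of_pos_left this hεpos
  obtain ⟨P, Q, hQ0, hQN, hδ⟩ := Real.exists_int_int_abs_mul_sub_le θ hNpos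
  -- coprime reduction
  set d : ℕ := Int.gcd P Q with hddef
  have hdpos : 0 < d := Int.gcd_pos_of_ne_zero_right P (by omega)
  set P₁ : ℤ := P / d with hP₁
  set Q₁ : ℤ := Q / d with hQ₁
  have hdP : (d : ℤ) ∣ P := Int.gcd_dvd_left P Q
  have hdQ : (d : ℤ) ∣ Q := Int.gcd_dvd_right P Q
  have hQeq : Q = d * Q₁ := by rw [hQ₁]; exact (Int.mul_ediv_cancel' hdQ).symm
  have hPeq : P = d * P₁ := by rw [hP₁]; exact (Int.mul_ediv_cancel' hdP).symm
  have hQ₁pos : 0 < Q₁ := by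
    have hd0 : (0:ℤ) < (d:ℤ) := by exact_mod_cast hdpos
    rcases lt_trichotomy Q₁ 0 with h | h | h
    · exfalso
      have : (d:ℤ) * Q₁ < 0 := mul_neg_of_pos_of_neg hd0 h
      rw [← hQeq] at this; omega
    · exfalso; rw [h, mul_zero] at hQeq; omega
    · exact h
  have hcop : Int.gcd P₁ Q₁ = 1 := Int.gcd_div_gcd_div_gcd hdpos
  have hQ₁leN : Q₁ ≤ N := by
    calc Q₁ ≤ (d : ℤ) * Q₁ := le_mul_of_one_le_left hQ₁pos.le (by exact_mod_cast hdpos)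
      _ = Q := hQeq.symm
      _ ≤ N := hQN
  have hδ₁ : |(Q₁ : ℝ) * θ - P₁| ≤ 1 / ((N : ℝ) + 1) := by
    have hd1 : (1 : ℝ) ≤ (d : ℝ) := by exact_mod_cast hdpos
    have key : (d : ℝ) * ((Q₁ : ℝ) * θ - P₁) = (Q : ℝ) * θ - P := by
      have h1 : ((Q : ℤ) : ℝ) = (d : ℝ) * (Q₁ : ℝ) := by exact_mod_cast hQeq
      have h2 : ((P : ℤ) : ℝ) = (d : ℝ) * (P₁ : ℝ) := by exact_mod_cast hPeq
      rw [h1, h2]; ring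
    have : |(Q₁ : ℝ) * θ - P₁| ≤ (d : ℝ) * |(Q₁ : ℝ) * θ - P₁| := by nlinarith [abs_nonneg ((Q₁ : ℝ) * θ - P₁)]
    calc |(Q₁ : ℝ) * θ - P₁| ≤ (d : ℝ) * |(Q₁ : ℝ) * θ - P₁| := this
      _ = |(d : ℝ) * ((Q₁ : ℝ) * θ - P₁)| := by
          rw [abs_mul, abs_of_nonneg (by positivity : (0:ℝ) ≤ (d:ℝ))]
      _ = |(Q : ℝ) * θ - P| := by rw [key]
      _ ≤ 1 / ((N : ℝ) + 1) := hδ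
  have hQ₁B : (B : ℤ) < Q₁ := by
    by_contra h
    push_neg at h
    have hmem : Q₁ ∈ Finset.Icc (1 : ℤ) (B : ℤ) := Finset.mem_Icc.mpr ⟨hQ₁pos, h⟩
    have : ε ≤ distNearestInt ((Q₁ : ℝ) * θ) := Finset.inf'_le _ hmem
    have h2 : distNearestInt ((Q₁ : ℝ) * θ) ≤ |(Q₁ : ℝ) * θ - P₁| := distNearestInt_le _ _
    linarith
  -- Bezout / residue selection
  set c : ℤ := round ((Q₁ : ℝ) * φ) with hcdef
  obtain ⟨x, y, hbez⟩ : ∃ x y : ℤ, P₁ * x + Q₁ * y = 1 := by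
    refine ⟨Int.gcdA P₁ Q₁, Int.gcdB P₁ Q₁, ?_⟩
    have := Int.gcd_eq_gcd_ab P₁ Q₁
    rw [hcop] at this
    exact_mod_cast this.symm
  set t : ℤ := (c * x) % Q₁ with htdef
  have ht0 : 0 ≤ t := Int.emod_nonneg _ (ne_of_gt hQ₁pos)
  have ht1 : t < Q₁ := Int.emod_lt_of_pos _ hQ₁pos
  set k : ℤ := -((c * x) / Q₁) * P₁ - c * y with hkdef
  have htP : t * P₁ = c + Q₁ * k := by
    have ht : t = c * x - Q₁ * ((c * x) / Q₁) := by
      rw [htdef]; rw [Int.emod_def]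
    rw [ht, hkdef]
    linear_combination c * hbez
  -- the good q
  refine ⟨Q₁ + t, ?_, ?_⟩
  · have : (B : ℝ) < (Q₁ : ℝ) := by exact_mod_cast hQ₁B
    have ht0' : (0:ℝ) ≤ (t : ℝ) := by exact_mod_cast ht0
    push_cast
    linarith
  · set j : ℤ := Q₁ + t with hjdef
    have hQ₁R : (0:ℝ) < (Q₁ : ℝ) := by exact_mod_cast hQ₁pos
    have htR0 : (0:ℝ) ≤ (t : ℝ) := by exact_mod_cast ht0
    have htR1 : (t : ℝ) < (Q₁ : ℝ) := by exact_mod_cast ht1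
    have hjR : (j : ℝ) = (Q₁ : ℝ) + (t : ℝ) := by push_cast [hjdef]; ring
    have hjpos : (0:ℝ) < (j : ℝ) := by rw [hjR]; linarith
    have hj2Q : (j : ℝ) ≤ 2 * (Q₁ : ℝ) := by rw [hjR]; linarith
    set D : ℝ := (Q₁ : ℝ) * θ - (P₁ : ℝ) with hDdef
    have htPR : (t : ℝ) * (P₁ : ℝ) = (c : ℝ) + (Q₁ : ℝ) * (k : ℝ) := by exact_mod_cast htP
    have key : ((j : ℝ) * θ - φ - ((P₁ + k : ℤ) : ℝ)) * (Q₁ : ℝ)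
        = D * (j : ℝ) + ((c : ℝ) - (Q₁ : ℝ) * φ) := by
      rw [hjR, hDdef]
      push_cast
      linear_combination htPR
    have hcφ : |(c : ℝ) - (Q₁ : ℝ) * φ| ≤ 1 / 2 := by
      have := abs_sub_round ((Q₁ : ℝ) * φ)
      rw [hcdef]
      rw [abs_sub_comm]
      exact this
    have hdist : distNearestInt ((j : ℝ) * θ - φ)
        ≤ (|D| * (j : ℝ) + 1 / 2) / (Q₁ : ℝ) := by
      have h1 : distNearestInt ((j : ℝ) * θ - φ) ≤ |(j : ℝ) * θ - φ - ((P₁ + k : ℤ) : ℝ)| :=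
        distNearestInt_le _ _
      have h2 : |(j : ℝ) * θ - φ - ((P₁ + k : ℤ) : ℝ)| = |D * (j : ℝ) + ((c : ℝ) - (Q₁ : ℝ) * φ)| / (Q₁ : ℝ) := by
        rw [← key, abs_mul, abs_of_pos hQ₁R, mul_div_assoc, div_self (ne_of_gt hQ₁R), mul_one]
      have h3 : |D * (j : ℝ) + ((c : ℝ) - (Q₁ : ℝ) * φ)| ≤ |D| * (j : ℝ) + 1 / 2 := by
        calc |D * (j : ℝ) + ((c : ℝ) - (Q₁ : ℝ) * φ)| ≤ |D * (j : ℝ)| + |(c : ℝ) - (Q₁ : ℝ) * φ| := abs_add_le _ _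
          _ ≤ |D| * (j : ℝ) + 1 / 2 := by
              rw [abs_mul, abs_of_pos hjpos]; linarith
      rw [h2] at h1
      calc distNearestInt ((j : ℝ) * θ - φ) ≤ |D * (j : ℝ) + ((c : ℝ) - (Q₁ : ℝ) * φ)| / (Q₁ : ℝ) := h1
        _ ≤ (|D| * (j : ℝ) + 1 / 2) / (Q₁ : ℝ) := by
            exact (div_le_div_iff_of_pos_right hQ₁R).mpr h3
    have hDbound : |D| ≤ 1 / ((N : ℝ) + 1) := hδ₁
    have hQN' : (Q₁ : ℝ) ≤ (N : ℝ) := by exact_mod_cast hQ₁leN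
    have habsj : |(j : ℝ)| = (j : ℝ) := abs_of_pos hjpos
    rw [habsj]
    calc (j : ℝ) * distNearestInt ((j : ℝ) * θ - φ)
        ≤ (j : ℝ) * ((|D| * (j : ℝ) + 1 / 2) / (Q₁ : ℝ)) := by
          exact mul_le_mul_of_nonneg_left hdist (le_of_lt hjpos)
      _ = (|D| * (j : ℝ) + 1 / 2) * ((j : ℝ) / (Q₁ : ℝ)) := by ring
      _ ≤ (|D| * (2 * (Q₁ : ℝ)) + 1 / 2) * 2 := by
          have hjq : (j : ℝ) / (Q₁ : ℝ) ≤ 2 := by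
            rw [div_le_iff₀ hQ₁R]; linarith
          have h4 : |D| * (j : ℝ) + 1/2 ≤ |D| * (2 * (Q₁:ℝ)) + 1/2 := by
            have := mul_le_mul_of_nonneg_left hj2Q (abs_nonneg D)
            linarith
          exact mul_le_mul h4 hjq (div_nonneg hjpos.le hQ₁R.le)
            (by positivity)
      _ ≤ 5 := by
          have hDQ : |D| * (Q₁ : ℝ) ≤ 1 := by
            calc |D| * (Q₁ : ℝ) ≤ (1 / ((N:ℝ)+1)) * (Q₁ : ℝ) :=
                  mul_le_mul_of_nonneg_right hDbound hQ₁R.le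
              _ ≤ 1 := by
                  rw [div_mul_eq_mul_div, div_le_one hN1]
                  linarith
          have h6 : (|D| * (2*(Q₁:ℝ)) + 1/2) * 2 = 4 * (|D| * (Q₁:ℝ)) + 1 := by ring
          linarith

lemma freq_le_five (θ : ℝ) (hθ : Irrational θ) (ψ : ℝ) :
    ∃ᶠ q : ℤ in Filter.cofinite,
      |(q : ℝ)| * distNearestInt ((q : ℝ) * θ - ψ) ≤ 5 := by
  rw [Filter.frequently_cofinite_iff_infinite]
  intro hfin
  have hfin' : ((fun q : ℤ => (q : ℝ)) ''
      {q : ℤ | |(q : ℝ)| * distNearestInt ((q : ℝ) * θ - ψ) ≤ 5}).Finite :=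
    hfin.image _
  obtain ⟨C, hC⟩ := hfin'.bddAbove
  obtain ⟨q, hq1, hq2⟩ := exists_large_good θ hθ ψ (C + 1)
  have : (q : ℝ) ≤ C := hC ⟨q, hq2, rfl⟩
  linarith

lemma Lconst_nonneg_aux (θ ψ : ℝ) (q : ℤ) :
    (0:ℝ) ≤ |(q : ℝ)| * distNearestInt ((q : ℝ) * θ - ψ) :=
  mul_nonneg (abs_nonneg _) (distNearestInt_nonneg _)

theorem Lconst_eq_zero_mul'
    (θ : ℝ) (hθ : Irrational θ)
    (φ : ℝ)
    (hzero : Lconst θ φ = 0) :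
    ∀ g : ℤ, g ≠ 0 → Lconst θ (g * φ) = 0 := by
  intro g hg0
  have hF5 := freq_le_five θ hθ φ
  have hG5 := freq_le_five θ hθ ((g : ℝ) * φ)
  have hGnn : ∀ q : ℤ, (0:ℝ) ≤ |(q : ℝ)| * distNearestInt ((q : ℝ) * θ - (g : ℝ) * φ) :=
    fun q => Lconst_nonneg_aux θ _ q
  -- small values of F exist frequently
  have hsmall : ∀ ε : ℝ, 0 < ε → ∃ᶠ q : ℤ in Filter.cofinite,
      |(q : ℝ)| * distNearestInt ((q : ℝ) * θ - φ) < ε := by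
    intro ε hε
    by_contra hcon
    rw [Filter.not_frequently] at hcon
    have hev : ∀ᶠ q : ℤ in Filter.cofinite,
        ε ≤ |(q : ℝ)| * distNearestInt ((q : ℝ) * θ - φ) := by
      filter_upwards [hcon] with q hq
      exact not_lt.mp hq
    have : ε ≤ Lconst θ φ :=
      Filter.le_liminf_of_le (Filter.IsCoboundedUnder.of_frequently_le hF5) hev
    rw [hzero] at this
    linarith
  refine le_antisymm ?_ ?_
  · -- liminf ≤ 0
    refine le_of_forall_pos_le_add ?_
    intro ε hε
    rw [zero_add]
    refine Filter.liminf_le_of_frequently_le ?_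
      (Filter.isBoundedUnder_of ⟨0, fun q => hGnn q⟩)
    -- frequently G ≤ ε
    have hg2 : (0:ℝ) < (g : ℝ)^2 + 1 := by positivity
    have hε' : 0 < ε / ((g : ℝ)^2 + 1) := by positivity
    have hS := hsmall _ hε'
    rw [Filter.frequently_cofinite_iff_infinite] at hS ⊢
    have hinj : Set.InjOn (fun q : ℤ => g * q)
        {q : ℤ | |(q : ℝ)| * distNearestInt ((q : ℝ) * θ - φ) < ε / ((g : ℝ)^2 + 1)} := by
      intro a _ b _ hab
      exact mul_left_cancel₀ hg0 hab
    refine Set.Infinite.mono ?_ (hS.image hinj)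
    rintro _ ⟨q, hq, rfl⟩
    simp only [Set.mem_setOf_eq] at hq ⊢
    have hcast : ((g * q : ℤ) : ℝ) = (g : ℝ) * (q : ℝ) := by push_cast; ring
    rw [hcast]
    have harg : (g : ℝ) * (q : ℝ) * θ - (g : ℝ) * φ = (g : ℝ) * ((q : ℝ) * θ - φ) := by
      ring
    rw [harg, abs_mul]
    calc |(g : ℝ)| * |(q : ℝ)| * distNearestInt ((g : ℝ) * ((q : ℝ) * θ - φ))
        ≤ |(g : ℝ)| * |(q : ℝ)| * (|(g : ℝ)| * distNearestInt ((q : ℝ) * θ - φ)) := by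
          refine mul_le_mul_of_nonneg_left (distNearestInt_int_mul g _) ?_
          positivity
      _ = (g : ℝ)^2 * (|(q : ℝ)| * distNearestInt ((q : ℝ) * θ - φ)) := by
          rw [← sq_abs (g : ℝ)]
          ring
      _ ≤ (g : ℝ)^2 * (ε / ((g : ℝ)^2 + 1)) := by
          refine mul_le_mul_of_nonneg_left hq.le (by positivity)
      _ ≤ ε := by
          rw [mul_div_assoc']
          rw [div_le_iff₀ hg2]
          nlinarith [sq_nonneg (g:ℝ)]
  · -- 0 ≤ liminf
    exact Filter.le_liminf_of_le (Filter.IsCoboundedUnder.of_frequently_le hG5)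
      (Filter.Eventually.of_forall hGnn)

/-- Corollary: in the leaper setting, for `φ = (rθ+m)/n` in reduced form, if
`L(θ, φ) = 0` then `L(θ, g·φ) = 0` for every integer `g` not a multiple of `n`. -/
theorem Lconst_eq_zero_mul
    (θ : ℝ) (hθ : Irrational θ)
    (b : ℕ → ℤ) (hb : ∀ i : ℕ, 1 ≤ i → 1 ≤ b i)
    (p q : ℤ → ℤ)
    (hpm1 : p (-1) = 1) (hqm1 : q (-1) = 0)
    (hp0 : p 0 = b 0) (hq0 : q 0 = 1)
    (hprec : ∀ i : ℕ, p ((i : ℤ) + 1) = b (i + 1) * p i + p ((i : ℤ) - 1))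
    (hqrec : ∀ i : ℕ, q ((i : ℤ) + 1) = b (i + 1) * q i + q ((i : ℤ) - 1))
    (hconv : Filter.Tendsto (fun i : ℕ => (p i : ℝ) / (q i : ℝ)) Filter.atTop (nhds θ))
    -- leaping subscripts
    (I : ℕ → ℕ) (hI : StrictMono I)
    (ha : Filter.Tendsto (fun j : ℕ => b (I j + 1)) Filter.atTop Filter.atTop)
    (hbdd : ∃ C : ℤ, ∀ i : ℕ, 1 ≤ i → (∀ j : ℕ, i ≠ I j + 1) → b i ≤ C)
    -- φ = (rθ + m)/n in reduced form
    (n : ℕ) (hn : 2 ≤ n) (r m : ℤ)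
    (hr : 0 ≤ r ∧ r < n) (hm : 0 ≤ m ∧ m < n)
    (hgcd : Int.gcd r (Int.gcd m n) = 1)
    (φ : ℝ) (hφ : φ = (r * θ + m) / n)
    (hzero : Lconst θ φ = 0) :
    ∀ g : ℤ, ¬ ((n : ℤ) ∣ g) → Lconst θ (g * φ) = 0 := by
  intro g hg
  have hg0 : g ≠ 0 := by
    rintro rfl
    exact hg (dvd_zero _)
  exact Lconst_eq_zero_mul' θ hθ φ hzero g hg0
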